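/- Every graph G of order n ≥ 2 satisfies st_D(G) ≤ n − D(G) + 1. -/
import Mathlib


open SimpleGraph

/-- The distinguishing number of a graph: the least `d` such that there is a vertex
labeling with `d` labels preserved only by the trivial automorphism. -/
noncomputable def distNum {V : Type*} (G : SimpleGraph V) : ℕ :=
  sInf {d : ℕ | ∃ f : V → Fin d, ∀ φ : G ≃g G, (∀ x, f (φ x) = f x) → ∀ x, φ x = x}

/-- The distinguishing stability of a graph: the minimum cardinality of a proper subset
`S` of the vertex set whose removal changes the distinguishing number. -/
noncomputable def stD {V : Type*} (G : SimpleGraph V) : ℕ :=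
  sInf {k : ℕ | ∃ S : Set V, S ≠ Set.univ ∧ S.ncard = k ∧
    distNum (G.induce Sᶜ) ≠ distNum G}

/-- The distinguishing bondage number of a graph: the minimum cardinality of a set
of edges whose removal changes the distinguishing number. -/
noncomputable def bD {V : Type*} (G : SimpleGraph V) : ℕ :=
  sInf {k : ℕ | ∃ F : Set (Sym2 V), F ⊆ G.edgeSet ∧ F.ncard = k ∧
    distNum (G.deleteEdges F) ≠ distNum G}

lemma distNum_le_card {W : Type*} [Fintype W] (H : SimpleGraph W) :
    distNum H ≤ Fintype.card W := by
  apply Nat.sInf_le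
  refine ⟨fun v => (Fintype.equivFin W) v, ?_⟩
  intro φ hφ x
  exact (Fintype.equivFin W).injective (hφ x)

/-- $st_D(G) \le n - D(G) + 1$. -/
theorem stD_le_card_sub_distNum {V : Type*} [Fintype V] (G : SimpleGraph V)
    (h : 2 ≤ Fintype.card V) :
    stD G ≤ Fintype.card V - distNum G + 1 := by
  classical
  set n := Fintype.card V with hn
  set D := distNum G with hD
  have hDn : D ≤ n := distNum_le_card G
  have hne : {d : ℕ | ∃ f : V → Fin d, ∀ φ : G ≃g G, (∀ x, f (φ x) = f x) → ∀ x, φ x = x}.Nonempty := by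
    refine ⟨n, fun v => (Fintype.equivFin V) v, ?_⟩
    intro φ hφ x
    exact (Fintype.equivFin V).injective (hφ x)
  have hD1 : 1 ≤ D := by
    by_contra hcon
    have hD0 : D = 0 := by omega
    have hmem : D ∈ {d : ℕ | ∃ f : V → Fin d, ∀ φ : G ≃g G, (∀ x, f (φ x) = f x) → ∀ x, φ x = x} :=
      Nat.sInf_mem hne
    rw [hD0] at hmem
    obtain ⟨f, -⟩ := hmem
    have : Nonempty V := Fintype.card_pos_iff.mp (by omega)
    exact (f this.some).elim0
  by_cases hD2 : 2 ≤ D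
  · -- choose a set A of size D - 1, remove its complement
    obtain ⟨t, -, htcard⟩ := Finset.exists_subset_card_eq
      (show D - 1 ≤ (Finset.univ : Finset V).card by rw [Finset.card_univ]; omega)
    set S : Set V := (↑t : Set V)ᶜ with hS
    have hScompl : Sᶜ = (↑t : Set V) := compl_compl _
    have htne : t.Nonempty := Finset.card_pos.mp (by omega)
    have hSne : S ≠ Set.univ := by
      intro hcon
      have : (↑t : Set V) = ∅ := by
        rw [← hScompl, hcon, Set.compl_univ]
      exact Finset.Nonempty.ne_empty htne (by
        simpa [Finset.coe_eq_empty] using this)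
    have hsum : (↑t : Set V).ncard + S.ncard = n := by
      have := Set.ncard_add_ncard_compl (↑t : Set V)
      rw [Nat.card_eq_fintype_card] at this
      exact this
    have htn : (↑t : Set V).ncard = D - 1 := by
      rw [Set.ncard_coe_finset, htcard]
    have hScard : S.ncard = n - D + 1 := by omega
    have hcardS : Nat.card ↥(Sᶜ) = D - 1 := by
      rw [Nat.card_coe_set_eq, hScompl, htn]
    haveI : Fintype ↥(Sᶜ) := Fintype.ofFinite _
    have hle : distNum (G.induce Sᶜ) ≤ D - 1 := by
      have := distNum_le_card (G.induce Sᶜ)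
      rwa [← Nat.card_eq_fintype_card, hcardS] at this
    apply Nat.sInf_le
    exact ⟨S, hSne, hScard, by omega⟩
  · -- D = 1, bound is n; any element of the set is at most n - 1
    have hDeq : D = 1 := by omega
    rw [hDeq]
    have : n - 1 + 1 = n := by omega
    rw [this]
    by_cases hT : {k : ℕ | ∃ S : Set V, S ≠ Set.univ ∧ S.ncard = k ∧
        distNum (G.induce Sᶜ) ≠ distNum G}.Nonempty
    · have hmem := Nat.sInf_mem hT
      obtain ⟨S, -, hcard, -⟩ := hmem
      have : S.ncard ≤ n := by
        have := Set.ncard_le_ncard (Set.subset_univ S) (Set.finite_univ)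
        rwa [Set.ncard_univ, Nat.card_eq_fintype_card] at this
      calc stD G ≤ S.ncard := hcard ▸ le_refl _
        _ ≤ n := this
    · rw [Set.not_nonempty_iff_eq_empty] at hT
      unfold stD
      rw [hT, Nat.sInf_empty]
      omega
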